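/- Let Σ be a finite alphabet, R ⊆ Σ* × Σ* an unambiguous rational relation, K ⊆ Σ* a regular language, and k ∈ ℕ. Then the language {u ∈ Σ* : |{v ∈ K : (u,v) ∈ R}| ≥ k} is regular (where the cardinality condition includes the case that the set is infinite). -/

import Mathlib

open Set
set_option linter.unusedSectionVars false

lemma encard_prod' {α β : Type*} (s : Set α) (t : Set β) :
    (s ×ˢ t).encard = s.encard * t.encard := by
  simp only [Set.encard, ENat.card]
  rw [Cardinal.mk_congr (Equiv.Set.prod s t), Cardinal.mk_prod, map_mul, Cardinal.toENat_lift,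
    Cardinal.toENat_lift]

lemma encard_biUnion' {α ι : Type*} (s : Finset ι) (C : ι → Set α)
    (h : ∀ i ∈ s, ∀ j ∈ s, i ≠ j → Disjoint (C i) (C j)) :
    (⋃ i ∈ s, C i).encard = ∑ i ∈ s, (C i).encard := by
  classical
  induction s using Finset.induction_on with
  | empty => simp
  | @insert a s' hi ih =>
    rw [Finset.sum_insert hi]
    have : (⋃ i ∈ insert a s', C i) = C a ∪ ⋃ i ∈ s', C i := by
      simp [Set.biUnion_insert]
    rw [this, Set.encard_union_eq, ih]
    · intro i hi' j hj hij
      exact h i (Finset.mem_insert_of_mem hi') j (Finset.mem_insert_of_mem hj) hij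
    · rw [Set.disjoint_iUnion_right]; intro i
      rw [Set.disjoint_iUnion_right]; intro hi'
      exact h a (Finset.mem_insert_self a s') i (Finset.mem_insert_of_mem hi')
        (by rintro rfl; exact hi hi')

section Cap
variable (k : ℕ)

lemma cap_add_left (x y : ℕ∞) : min (k:ℕ∞) (min (k:ℕ∞) x + y) = min (k:ℕ∞) (x + y) := by
  rcases le_total (k:ℕ∞) x with h | h
  · rw [min_eq_left h, min_eq_left, min_eq_left]
    · exact h.trans le_self_add
    · exact le_self_add
  · rw [min_eq_right h]

lemma cap_mul_left (x y : ℕ∞) : min (k:ℕ∞) (min (k:ℕ∞) x * y) = min (k:ℕ∞) (x * y) := by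
  rcases le_total (k:ℕ∞) x with h | h
  · rcases eq_or_ne y 0 with rfl | hy
    · simp
    · have hy1 : 1 ≤ y := ENat.one_le_iff_ne_zero.mpr hy
      rw [min_eq_left h, min_eq_left, min_eq_left]
      · calc (k:ℕ∞) ≤ x := h
          _ = x * 1 := (mul_one x).symm
          _ ≤ x * y := mul_le_mul_right hy1 x
      · calc (k:ℕ∞) = k * 1 := (mul_one _).symm
          _ ≤ k * y := mul_le_mul_right hy1 _
  · rw [min_eq_right h]

lemma cap_add_cong {x x' : ℕ∞} (h : min (k:ℕ∞) x = min (k:ℕ∞) x') (y : ℕ∞) :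
    min (k:ℕ∞) (x + y) = min (k:ℕ∞) (x' + y) := by
  rw [← cap_add_left, h, cap_add_left]

lemma cap_sum_cong {ι : Type*} (s : Finset ι) (f g : ι → ℕ∞)
    (h : ∀ i ∈ s, min (k:ℕ∞) (f i) = min (k:ℕ∞) (g i)) :
    min (k:ℕ∞) (∑ i ∈ s, f i) = min (k:ℕ∞) (∑ i ∈ s, g i) := by
  classical
  induction s using Finset.induction_on with
  | empty => simp
  | @insert a s' hi ih =>
    rw [Finset.sum_insert hi, Finset.sum_insert hi]
    rw [cap_add_cong k (h a (Finset.mem_insert_self a s'))]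
    rw [add_comm, cap_add_cong k (ih fun i hi' => h i (Finset.mem_insert_of_mem hi')), add_comm]

lemma cap_le_iff (x : ℕ∞) : (k:ℕ∞) ≤ x ↔ (k:ℕ∞) ≤ min (k:ℕ∞) x := by
  simp [le_min_iff]

end Cap

section Decomp
variable {Γ A : Type}

/-- existence of the canonical decomposition at the last non-erased letter -/
lemma decomp_exists (F : Γ → List A) (hF : ∀ g, (F g).length ≤ 1) (u : List A) (a : A) :
    ∀ x' : List Γ, x'.flatMap F = u ++ [a] →
    ∃ x g e, x' = x ++ g :: e ∧ F g = [a] ∧ (∀ g' ∈ e, F g' = []) ∧ x.flatMap F = u := by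
  intro x'
  induction x' using List.reverseRecOn with
  | nil => intro h; simp at h
  | append_singleton y g ih =>
    intro h
    rw [List.flatMap_append, List.flatMap_singleton] at h
    rcases List.eq_nil_or_concat (F g) with hg | ⟨l, b, hg⟩
    · rw [hg, List.append_nil] at h
      obtain ⟨x, g', e, hy, hg', he, hx⟩ := ih h
      exact ⟨x, g', e ++ [g], by rw [hy]; simp, hg', by
        intro g'' hg''; rcases List.mem_append.mp hg'' with h' | h'
        · exact he g'' h'
        · simp at h'; subst h'; exact hg, hx⟩
    · have hl : l = [] := by
        have := hF g; rw [hg] at this; simp at this; exact this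
      subst hl
      rw [List.concat_eq_append, List.nil_append] at hg
      rw [hg] at h
      have h2 := List.append_inj' h rfl
      obtain ⟨h3, h4⟩ := h2
      refine ⟨y, g, [], by simp, ?_, by simp, h3⟩
      rw [hg]
      simpa using h4

/-- uniqueness of the decomposition -/
lemma decomp_unique (F : Γ → List A) (a : A) :
    ∀ (x₁ : List Γ) (g₁ : Γ) (e₁ : List Γ) (x₂ : List Γ) (g₂ : Γ) (e₂ : List Γ),
    F g₁ = [a] → F g₂ = [a] → (∀ g ∈ e₁, F g = []) → (∀ g ∈ e₂, F g = []) →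
    x₁ ++ g₁ :: e₁ = x₂ ++ g₂ :: e₂ → x₁ = x₂ ∧ g₁ = g₂ ∧ e₁ = e₂ := by
  intro x₁
  induction x₁ with
  | nil =>
    intro g₁ e₁ x₂ g₂ e₂ hg₁ hg₂ he₁ he₂ heq
    cases x₂ with
    | nil => simp at heq ⊢; exact heq
    | cons h x₂' =>
      exfalso
      simp only [List.nil_append, List.cons_append, List.cons.injEq] at heq
      have : g₂ ∈ e₁ := by
        rw [heq.2]
        exact List.mem_append.mpr (Or.inr List.mem_cons_self)
      have := he₁ g₂ this
      rw [hg₂] at this; simp at this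
  | cons h x₁' ih =>
    intro g₁ e₁ x₂ g₂ e₂ hg₁ hg₂ he₁ he₂ heq
    cases x₂ with
    | nil =>
      exfalso
      simp only [List.nil_append, List.cons_append, List.cons.injEq] at heq
      have : g₁ ∈ e₂ := by
        rw [← heq.2]
        exact List.mem_append.mpr (Or.inr List.mem_cons_self)
      have := he₂ g₁ this
      rw [hg₁] at this; simp at this
    | cons h' x₂' =>
      simp only [List.cons_append, List.cons.injEq] at heq
      obtain ⟨rfl, heq'⟩ := heq
      obtain ⟨h1, h2, h3⟩ := ih g₁ e₁ x₂' g₂ e₂ hg₁ hg₂ he₁ he₂ heq'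
      exact ⟨by rw [h1], h2, h3⟩

end Decomp

section Core
variable {Γ A Q : Type} [Fintype Q]

/-- count of erased words driving `p` to `q` -/
noncomputable def Eps (M : DFA Γ Q) (F : Γ → List A) (p q : Q) : ℕ∞ :=
  {e : List Γ | (∀ g ∈ e, F g = []) ∧ M.evalFrom p e = q}.encard

/-- weighted transition count -/
noncomputable def Wt (M : DFA Γ Q) (F : Γ → List A) (a : A) (p q : Q) : ℕ∞ :=
  {z : List Γ | ∃ g e, z = g :: e ∧ F g = [a] ∧ (∀ g' ∈ e, F g' = []) ∧
    M.evalFrom p z = q}.encard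

/-- state-indexed count of preimages -/
noncomputable def Vc (M : DFA Γ Q) (F : Γ → List A) (u : List A) (q : Q) : ℕ∞ :=
  {x : List Γ | M.eval x = q ∧ x.flatMap F = u}.encard

lemma Vc_nil (M : DFA Γ Q) (F : Γ → List A) (q : Q) :
    Vc M F [] q = Eps M F M.start q := by
  unfold Vc Eps
  congr 1
  ext x
  simp only [Set.mem_setOf_eq, List.flatMap_eq_nil_iff, DFA.eval]
  tauto

lemma Vc_step (M : DFA Γ Q) (F : Γ → List A) (hF : ∀ g, (F g).length ≤ 1)
    (u : List A) (a : A) (r : Q) :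
    Vc M F (u ++ [a]) r = ∑ q : Q, Vc M F u q * Wt M F a q r := by
  classical
  set Aq : Q → Set (List Γ) := fun q => {x | M.eval x = q ∧ x.flatMap F = u} with hAq
  set Bq : Q → Set (List Γ) := fun q => {z | ∃ g e, z = g :: e ∧ F g = [a] ∧
    (∀ g' ∈ e, F g' = []) ∧ M.evalFrom q z = r} with hBq
  have hcover : {x : List Γ | M.eval x = r ∧ x.flatMap F = u ++ [a]}
      = ⋃ q ∈ (Finset.univ : Finset Q), (fun p : List Γ × List Γ => p.1 ++ p.2) '' (Aq q ×ˢ Bq q) := by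
    ext x'
    simp only [Set.mem_setOf_eq, Set.mem_iUnion, Finset.mem_univ, Set.mem_image,
      Set.mem_prod, exists_true_left, Prod.exists]
    constructor
    · rintro ⟨hev, hflat⟩
      obtain ⟨x, g, e, rfl, hg, he, hx⟩ := decomp_exists F hF u a x' hflat
      refine ⟨M.eval x, x, g :: e, ⟨⟨rfl, hx⟩, ⟨g, e, rfl, hg, he, ?_⟩⟩, rfl⟩
      rw [← hev, DFA.eval, DFA.evalFrom_of_append]
    · rintro ⟨q, x, z, ⟨⟨hq, hx⟩, ⟨g, e, rfl, hg, he, hz⟩⟩, rfl⟩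
      constructor
      · have hq' : M.evalFrom M.start x = q := hq
        rw [DFA.eval, DFA.evalFrom_of_append, hq']
        exact hz
      · rw [List.flatMap_append, hx, List.flatMap_cons, hg,
          List.flatMap_eq_nil_iff.mpr he]
        simp
  have hdisj : ∀ q₁ ∈ (Finset.univ : Finset Q), ∀ q₂ ∈ (Finset.univ : Finset Q), q₁ ≠ q₂ →
      Disjoint ((fun p : List Γ × List Γ => p.1 ++ p.2) '' (Aq q₁ ×ˢ Bq q₁))
        ((fun p : List Γ × List Γ => p.1 ++ p.2) '' (Aq q₂ ×ˢ Bq q₂)) := by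
    intro q₁ _ q₂ _ hne
    rw [Set.disjoint_left]
    rintro x' ⟨⟨x₁, z₁⟩, ⟨⟨hq₁, _⟩, ⟨g₁, e₁, rfl, hg₁, he₁, _⟩⟩, h₁⟩
      ⟨⟨x₂, z₂⟩, ⟨⟨hq₂, _⟩, ⟨g₂, e₂, rfl, hg₂, he₂, _⟩⟩, h₂⟩
    have heq : x₁ ++ g₁ :: e₁ = x₂ ++ g₂ :: e₂ := by
      have := h₁.trans h₂.symm; simpa using this
    obtain ⟨rfl, -, -⟩ := decomp_unique F a x₁ g₁ e₁ x₂ g₂ e₂ hg₁ hg₂ he₁ he₂ heq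
    exact hne (hq₁.symm.trans hq₂)
  have hinj : ∀ q : Q, Set.InjOn (fun p : List Γ × List Γ => p.1 ++ p.2) (Aq q ×ˢ Bq q) := by
    intro q
    rintro ⟨x₁, z₁⟩ ⟨_, g₁, e₁, rfl, hg₁, he₁, _⟩ ⟨x₂, z₂⟩ ⟨_, g₂, e₂, rfl, hg₂, he₂, _⟩ heq
    obtain ⟨rfl, rfl, rfl⟩ := decomp_unique F a x₁ g₁ e₁ x₂ g₂ e₂ hg₁ hg₂ he₁ he₂
      (by simpa using heq)
    rfl
  unfold Vc
  rw [hcover, encard_biUnion' _ _ hdisj]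
  apply Finset.sum_congr rfl
  intro q _
  rw [(hinj q).encard_image, encard_prod']
  rfl
end Core

section CoreDFA
open scoped Classical
variable {Γ A Q : Type} [Fintype Q]

noncomputable instance capFintype (k : ℕ) : Fintype {x : ℕ∞ // x ≤ (k:ℕ∞)} := by
  apply Fintype.ofSurjective (fun i : Fin (k+1) =>
    (⟨((i:ℕ):ℕ∞), by exact_mod_cast Nat.le_of_lt_succ i.isLt⟩ : {x : ℕ∞ // x ≤ (k:ℕ∞)}))
  rintro ⟨x, hx⟩
  lift x to ℕ using (hx.trans_lt (WithTop.coe_lt_top k)).ne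
  have hxk : x ≤ k := by exact_mod_cast hx
  exact ⟨⟨x, by omega⟩, by simp⟩

/-- the capped counting DFA -/
noncomputable def cDFA (M : DFA Γ Q) (F : Γ → List A) (k : ℕ) :
    DFA A (Q → {x : ℕ∞ // x ≤ (k:ℕ∞)}) where
  step := fun v a => fun r => ⟨min (k:ℕ∞) (∑ q : Q, (v q).val * Wt M F a q r), min_le_left _ _⟩
  start := fun q => ⟨min (k:ℕ∞) (Eps M F M.start q), min_le_left _ _⟩
  accept := {v | (k:ℕ∞) ≤ ∑ q : Q, if q ∈ M.accept then (v q).val else 0}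

lemma cDFA_eval (M : DFA Γ Q) (F : Γ → List A) (k : ℕ) (hF : ∀ g, (F g).length ≤ 1)
    (u : List A) : ∀ r : Q, ((cDFA M F k).eval u r).val = min (k:ℕ∞) (Vc M F u r) := by
  induction u using List.reverseRecOn with
  | nil => intro r; rw [Vc_nil]; rfl
  | append_singleton u a ih =>
    intro r
    have h1 : (cDFA M F k).eval (u ++ [a]) = (cDFA M F k).step ((cDFA M F k).eval u) a :=
      DFA.eval_append_singleton _ _ _
    rw [h1]
    show min (k:ℕ∞) (∑ q : Q, (((cDFA M F k).eval u) q).val * Wt M F a q r) = _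
    rw [Vc_step M F hF]
    apply cap_sum_cong
    intro q _
    rw [ih q, cap_mul_left]

lemma counts (M : DFA Γ Q) (F : Γ → List A) (u : List A) :
    {x : List Γ | x ∈ M.accepts ∧ x.flatMap F = u}.encard
      = ∑ q : Q, if q ∈ M.accept then Vc M F u q else 0 := by
  rw [← Finset.sum_filter]
  have hcover : {x : List Γ | x ∈ M.accepts ∧ x.flatMap F = u}
      = ⋃ q ∈ Finset.univ.filter (· ∈ M.accept), {x : List Γ | M.eval x = q ∧ x.flatMap F = u} := by
    ext x
    simp only [Set.mem_setOf_eq, Set.mem_iUnion, Finset.mem_filter, Finset.mem_univ, true_and,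
      DFA.mem_accepts]
    constructor
    · rintro ⟨hx, hflat⟩; exact ⟨M.eval x, hx, rfl, hflat⟩
    · rintro ⟨q, hq, hev, hflat⟩; exact ⟨by rw [hev]; exact hq, hflat⟩
  rw [hcover, encard_biUnion']
  · rfl
  · intro q₁ _ q₂ _ hne
    rw [Set.disjoint_left]
    rintro x ⟨h₁, -⟩ ⟨h₂, -⟩
    exact hne (h₁.symm.trans h₂)

theorem core_regular (M : DFA Γ Q) (F : Γ → List A) (hF : ∀ g, (F g).length ≤ 1) (k : ℕ) :
    Language.IsRegular
      {u : List A | (k:ℕ∞) ≤ {x : List Γ | x ∈ M.accepts ∧ x.flatMap F = u}.encard} := by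
  refine ⟨_, inferInstance, cDFA M F k, ?_⟩
  ext u
  rw [DFA.mem_accepts]
  show ((k:ℕ∞) ≤ ∑ q : Q, if q ∈ M.accept then (((cDFA M F k).eval u) q).val else 0) ↔ _
  have hmem : u ∈ ({u : List A |
      (k:ℕ∞) ≤ {x : List Γ | x ∈ M.accepts ∧ x.flatMap F = u}.encard} : Language A)
      ↔ (k:ℕ∞) ≤ {x : List Γ | x ∈ M.accepts ∧ x.flatMap F = u}.encard := Iff.rfl
  refine Iff.trans ?_ hmem.symm; rw [counts]
  have key : min (k:ℕ∞) (∑ q : Q, if q ∈ M.accept then (((cDFA M F k).eval u) q).val else 0)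
      = min (k:ℕ∞) (∑ q : Q, if q ∈ M.accept then Vc M F u q else 0) := by
    apply cap_sum_cong
    intro q _
    by_cases hq : q ∈ M.accept
    · rw [if_pos hq, if_pos hq, cDFA_eval M F k hF, ← min_assoc, min_self]
    · rw [if_neg hq, if_neg hq]
  rw [cap_le_iff, key, ← cap_le_iff]
end CoreDFA
set_option linter.unusedSectionVars false

section Tau
open scoped Classical
variable {Γ A Q : Type} [Fintype Γ] [Fintype A]

/-- split each letter `g` into `inl g` followed by the letters of `F g`. -/
def tau (F : Γ → List A) (g : Γ) : List (Γ ⊕ A) := Sum.inl g :: (F g).map Sum.inr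

/-- emission function on the split alphabet -/
def emit : Γ ⊕ A → List A := Sum.elim (fun _ => []) (fun a => [a])

lemma emit_len (c : Γ ⊕ A) : (emit c).length ≤ 1 := by cases c <;> simp [emit]

lemma flatMap_emit_tau (F : Γ → List A) (w : List Γ) :
    (w.flatMap (tau F)).flatMap (emit (Γ := Γ)) = w.flatMap F := by
  induction w with
  | nil => simp
  | cons g w' ih =>
    simp only [List.flatMap_cons, List.flatMap_append, ih, tau, List.flatMap_cons]
    simp [emit, List.flatMap_map, Function.comp]

lemma tau_flatMap_injective (F : Γ → List A) :
    Function.Injective (fun w : List Γ => w.flatMap (tau F)) := by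
  have key : ∀ w : List Γ,
      (w.flatMap (tau F)).flatMap (Sum.elim (fun g => [g]) (fun _ => ([] : List Γ))) = w := by
    intro w
    induction w with
    | nil => simp
    | cons g w' ih =>
      simp only [List.flatMap_cons, List.flatMap_append, ih, tau, List.flatMap_cons]
      simp [List.flatMap_map, Function.comp]
  intro w₁ w₂ h
  have := congrArg (fun x : List (Γ ⊕ A) =>
    x.flatMap (Sum.elim (fun g => [g]) (fun _ => ([] : List Γ)))) h
  simpa [key] using this

/-- pending-suffix type -/
abbrev Pend (F : Γ → List A) : Type := {s : List A // s.length ≤ Finset.univ.sup fun g => (F g).length}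

noncomputable instance pendFintype (F : Γ → List A) : Fintype (Pend F) := by
  classical
  apply Fintype.ofInjective
    (fun s : Pend F => fun i : Fin ((Finset.univ.sup fun g => (F g).length) + 1) => s.val[i.val]?)
  intro s t h
  apply Subtype.ext
  apply List.ext_getElem?
  intro n
  by_cases hn : n < (Finset.univ.sup fun g => (F g).length) + 1
  · exact congrFun h ⟨n, hn⟩
  · rw [List.getElem?_eq_none, List.getElem?_eq_none]
    · exact le_trans t.prop (by omega)
    · exact le_trans s.prop (by omega)

def pnil (F : Γ → List A) : Pend F := ⟨[], by simp⟩

def pfull (F : Γ → List A) (g : Γ) : Pend F :=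
  ⟨F g, Finset.le_sup (f := fun g => (F g).length) (Finset.mem_univ g)⟩

def ptail (F : Γ → List A) (s : Pend F) : Pend F :=
  ⟨s.val.tail, le_trans (by rw [List.length_tail]; omega) s.prop⟩

/-- DFA over the split alphabet accepting exactly `tau`-images of words accepted by `M`. -/
noncomputable def tDFA (M : DFA Γ Q) (F : Γ → List A) : DFA (Γ ⊕ A) (Option (Q × Pend F)) where
  step := fun st c =>
    match st, c with
    | none, _ => none
    | some (q, s), Sum.inl g => if s.val = [] then some (M.step q g, pfull F g) else none
    | some (q, s), Sum.inr a => if s.val.head? = some a then some (q, ptail F s) else none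
  start := some (M.start, pnil F)
  accept := {st | ∃ q, st = some (q, pnil F) ∧ q ∈ M.accept}

variable (M : DFA Γ Q) (F : Γ → List A)

lemma tstep_none (c : Γ ⊕ A) : (tDFA M F).step none c = none := by cases c <;> rfl

lemma tevalFrom_none (x : List (Γ ⊕ A)) : (tDFA M F).evalFrom none x = none := by
  induction x with
  | nil => rfl
  | cons c x' ih => simpa [DFA.evalFrom, tstep_none] using ih

lemma tstep_inl (q : Q) (s : Pend F) (g : Γ) :
    (tDFA M F).step (some (q, s)) (Sum.inl g) =
      if s.val = [] then some (M.step q g, pfull F g) else none := rfl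

lemma tstep_inr (q : Q) (s : Pend F) (a : A) :
    (tDFA M F).step (some (q, s)) (Sum.inr a) =
      if s.val.head? = some a then some (q, ptail F s) else none := rfl

end Tau

section Tau2
open scoped Classical
variable {Γ A Q : Type} [Fintype Γ] [Fintype A] (M : DFA Γ Q) (F : Γ → List A)

lemma tevalFrom_cons (st : Option (Q × Pend F)) (c : Γ ⊕ A) (x : List (Γ ⊕ A)) :
    (tDFA M F).evalFrom st (c :: x) = (tDFA M F).evalFrom ((tDFA M F).step st c) x := rfl

lemma tconsume (q : Q) (s : List A) (hs : s.length ≤ Finset.univ.sup fun g => (F g).length)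
    (x : List (Γ ⊕ A)) :
    (tDFA M F).evalFrom (some (q, ⟨s, hs⟩)) (s.map Sum.inr ++ x) =
      (tDFA M F).evalFrom (some (q, pnil F)) x := by
  induction s with
  | nil => rfl
  | cons a s' ih =>
    have hs' : s'.length ≤ Finset.univ.sup fun g => (F g).length := by
      rw [List.length_cons] at hs; omega
    rw [List.map_cons, List.cons_append, tevalFrom_cons, tstep_inr]
    rw [if_pos (by simp)]
    have : ptail F ⟨a :: s', hs⟩ = ⟨s', hs'⟩ := by simp [ptail]
    rw [this, ih hs']

lemma tforward (w : List Γ) (q : Q) :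
    (tDFA M F).evalFrom (some (q, pnil F)) (w.flatMap (tau F)) =
      some (M.evalFrom q w, pnil F) := by
  induction w generalizing q with
  | nil => rfl
  | cons g w' ih =>
    rw [List.flatMap_cons, tau, List.cons_append, tevalFrom_cons, tstep_inl,
      if_pos (show (pnil F).val = [] from rfl)]
    show (tDFA M F).evalFrom (some (M.step q g, pfull F g)) ((F g).map Sum.inr ++ _) = _
    rw [show pfull F g = ⟨F g, Finset.le_sup (f := fun g => (F g).length) (Finset.mem_univ g)⟩ from rfl, tconsume, ih]
    rfl

lemma tback (x : List (Γ ⊕ A)) : ∀ (q : Q) (s : Pend F) (r : Q),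
    (tDFA M F).evalFrom (some (q, s)) x = some (r, pnil F) →
    ∃ w : List Γ, x = s.val.map Sum.inr ++ w.flatMap (tau F) ∧ r = M.evalFrom q w := by
  induction x with
  | nil =>
    intro q s r h
    simp only [DFA.evalFrom, List.foldl_nil, Option.some.injEq, Prod.mk.injEq] at h
    refine ⟨[], ?_, ?_⟩
    · rw [h.2, pnil]; rfl
    · exact h.1.symm
  | cons c x' ih =>
    intro q s r h
    obtain ⟨sv, hsv⟩ := s
    cases sv with
    | nil =>
      cases c with
      | inl g =>
        rw [tevalFrom_cons, tstep_inl, if_pos (show (⟨[], hsv⟩ : Pend F).val = [] from rfl)] at h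
        obtain ⟨w', hx', hr⟩ := ih (M.step q g) (pfull F g) r h
        refine ⟨g :: w', ?_, hr⟩
        simp only [List.map_nil, List.nil_append, List.flatMap_cons, tau]
        rw [hx']
        rfl
      | inr a =>
        rw [tevalFrom_cons, tstep_inr] at h
        rw [if_neg (by simp)] at h
        rw [tevalFrom_none] at h
        exact absurd h (by simp)
    | cons b sv' =>
      cases c with
      | inl g =>
        rw [tevalFrom_cons, tstep_inl, if_neg (by simp)] at h
        rw [tevalFrom_none] at h
        exact absurd h (by simp)
      | inr a =>
        rw [tevalFrom_cons, tstep_inr] at h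
        by_cases hba : (b = a)
        · rw [if_pos (by simp [hba])] at h
          have hsv' : sv'.length ≤ Finset.univ.sup fun g => (F g).length := by
            rw [List.length_cons] at hsv; omega
          have : ptail F ⟨b :: sv', hsv⟩ = ⟨sv', hsv'⟩ := by simp [ptail]
          rw [this] at h
          obtain ⟨w, hx', hr⟩ := ih q ⟨sv', hsv'⟩ r h
          refine ⟨w, ?_, hr⟩
          simp only [List.map_cons, List.cons_append, hba]
          rw [hx']
        · rw [if_neg (by simp [hba]), tevalFrom_none] at h
          exact absurd h (by simp)

lemma taccepts (x : List (Γ ⊕ A)) :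
    x ∈ (tDFA M F).accepts ↔ ∃ w, w ∈ M.accepts ∧ x = w.flatMap (tau F) := by
  rw [DFA.mem_accepts]
  constructor
  · rintro ⟨q, hev, hq⟩
    obtain ⟨w, hx, hr⟩ := tback M F x M.start (pnil F) q hev
    refine ⟨w, ?_, by simpa [pnil] using hx⟩
    rw [DFA.mem_accepts, DFA.eval, ← hr]; exact hq
  · rintro ⟨w, hw, rfl⟩
    refine ⟨M.evalFrom M.start w, ?_, hw⟩
    exact tforward M F w M.start

section Glue
variable {Γ A : Type}

/-- product of a DFA on `Γ` with a DFA on `A` pulled back along an emission `G`. -/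
def prodDFA {σS σK : Type} (MS : DFA Γ σS) (MK : DFA A σK) (G : Γ → List A) :
    DFA Γ (σS × σK) where
  step := fun pq g => (MS.step pq.1 g, MK.evalFrom pq.2 (G g))
  start := (MS.start, MK.start)
  accept := {pq | pq.1 ∈ MS.accept ∧ pq.2 ∈ MK.accept}

lemma prodDFA_evalFrom {σS σK : Type} (MS : DFA Γ σS) (MK : DFA A σK) (G : Γ → List A)
    (w : List Γ) : ∀ p q, (prodDFA MS MK G).evalFrom (p, q) w
      = (MS.evalFrom p w, MK.evalFrom q (w.flatMap G)) := by
  induction w with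
  | nil => intro p q; rfl
  | cons g w' ih =>
    intro p q
    show (prodDFA MS MK G).evalFrom ((prodDFA MS MK G).step (p, q) g) w' = _
    rw [show (prodDFA MS MK G).step (p, q) g = (MS.step p g, MK.evalFrom q (G g)) from rfl, ih]
    rw [List.flatMap_cons, DFA.evalFrom_of_append]
    rfl

lemma prodDFA_accepts {σS σK : Type} (MS : DFA Γ σS) (MK : DFA A σK) (G : Γ → List A)
    (w : List Γ) : w ∈ (prodDFA MS MK G).accepts ↔
      w ∈ MS.accepts ∧ w.flatMap G ∈ MK.accepts := by
  rw [DFA.mem_accepts, DFA.mem_accepts, DFA.mem_accepts]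
  show (prodDFA MS MK G).evalFrom (MS.start, MK.start) w ∈ _ ↔ _
  rw [prodDFA_evalFrom]
  rfl

end Glue



/-- `R ⊆ Σ* × Σ*` is unambiguous rational: there are an alphabet `Γ`, a regular language
`S ⊆ Γ*`, and a monoid homomorphism `h : Γ* → Σ* × Σ*` mapping `S` bijectively onto `R`. -/
def IsUnambRat {A : Type} (R : Set (List A × List A)) : Prop :=
  ∃ (Γ : Type) (_ : Fintype Γ) (S : Language Γ)
    (h : FreeMonoid Γ →* FreeMonoid A × FreeMonoid A),
    S.IsRegular ∧
    Set.BijOn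
      (fun wrd : List Γ =>
        (((h (FreeMonoid.ofList wrd)).1).toList, ((h (FreeMonoid.ofList wrd)).2).toList))
      S R

/-- For unambiguous rational `R`, regular `K` and `k ∈ ℕ`, the language
`{u : |{v ∈ K : (u,v) ∈ R}| ≥ k}` is regular (infinite sets count as `≥ k`). -/
theorem counting_image_regular {A : Type} [Fintype A] (R : Set (List A × List A))
    (hR : IsUnambRat R) (K : Language A) (hK : K.IsRegular) (k : ℕ) :
    Language.IsRegular
      {u : List A | (k : ℕ∞) ≤ {v : List A | v ∈ K ∧ (u, v) ∈ R}.encard} := by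
  classical
  obtain ⟨Γ, instΓ, S, h, hSreg, hbij⟩ := hR
  obtain ⟨σS, iS, MS, hMS⟩ := hSreg
  obtain ⟨σK, iK, MK, hMK⟩ := hK
  haveI := instΓ; haveI := iS; haveI := iK
  set F : Γ → List A := fun g => ((h (FreeMonoid.of g)).1).toList with hF
  set G : Γ → List A := fun g => ((h (FreeMonoid.of g)).2).toList with hG
  have hflat : ∀ w : List Γ, ((h (FreeMonoid.ofList w)).1).toList = w.flatMap F
      ∧ ((h (FreeMonoid.ofList w)).2).toList = w.flatMap G := by
    intro w
    induction w with
    | nil =>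
      have h1 : FreeMonoid.ofList ([] : List Γ) = 1 := rfl
      rw [h1, map_one]
      constructor <;> rfl
    | cons g w' ih =>
      have : FreeMonoid.ofList (g :: w') = FreeMonoid.of g * FreeMonoid.ofList w' := rfl
      rw [this, map_mul]
      constructor
      · rw [Prod.fst_mul, FreeMonoid.toList_mul, ih.1, List.flatMap_cons]
      · rw [Prod.snd_mul, FreeMonoid.toList_mul, ih.2, List.flatMap_cons]
  -- the combined DFA accepting words of S whose second emission lies in K
  set Mc : DFA Γ (σS × σK) := prodDFA MS MK G with hMc
  have hMcacc : ∀ w : List Γ, w ∈ Mc.accepts ↔ w ∈ S ∧ w.flatMap G ∈ K := by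
    intro w
    rw [hMc, prodDFA_accepts, hMS, hMK]
  -- transfer the count of v's to the count of w's
  have hcount : ∀ u : List A, {v : List A | v ∈ K ∧ (u, v) ∈ R}.encard
      = {w : List Γ | w ∈ Mc.accepts ∧ w.flatMap F = u}.encard := by
    intro u
    have himg : {v : List A | v ∈ K ∧ (u, v) ∈ R}
        = (fun w : List Γ => w.flatMap G) '' {w : List Γ | w ∈ Mc.accepts ∧ w.flatMap F = u} := by
      ext v
      simp only [Set.mem_setOf_eq, Set.mem_image]
      constructor
      · rintro ⟨hvK, hvR⟩
        obtain ⟨w, hwS, hwe⟩ := hbij.surjOn hvR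
        have h1 : w.flatMap F = u := by
          have := congrArg Prod.fst hwe
          simpa [(hflat w).1] using this
        have h2 : w.flatMap G = v := by
          have := congrArg Prod.snd hwe
          simpa [(hflat w).2] using this
        exact ⟨w, ⟨(hMcacc w).mpr ⟨hwS, by rw [h2]; exact hvK⟩, h1⟩, h2⟩
      · rintro ⟨w, ⟨hwacc, hwF⟩, rfl⟩
        obtain ⟨hwS, hwK⟩ := (hMcacc w).mp hwacc
        refine ⟨hwK, ?_⟩
        have := hbij.mapsTo hwS
        simpa [(hflat w).1, (hflat w).2, hwF] using this
    rw [himg]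
    apply Set.InjOn.encard_image
    rintro w₁ ⟨hw₁, hF₁⟩ w₂ ⟨hw₂, hF₂⟩ hGeq
    apply hbij.injOn ((hMcacc w₁).mp hw₁).1 ((hMcacc w₂).mp hw₂).1
    simp only [(hflat w₁).1, (hflat w₁).2, (hflat w₂).1, (hflat w₂).2]
    rw [hF₁, hF₂]
    exact Prod.ext rfl hGeq
  -- transfer through the splitting construction
  have hcount2 : ∀ u : List A, {w : List Γ | w ∈ Mc.accepts ∧ w.flatMap F = u}.encard
      = {x : List (Γ ⊕ A) | x ∈ (tDFA Mc F).accepts ∧ x.flatMap emit = u}.encard := by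
    intro u
    have himg : {x : List (Γ ⊕ A) | x ∈ (tDFA Mc F).accepts ∧ x.flatMap emit = u}
        = (fun w : List Γ => w.flatMap (tau F)) ''
          {w : List Γ | w ∈ Mc.accepts ∧ w.flatMap F = u} := by
      ext x
      simp only [Set.mem_setOf_eq, Set.mem_image]
      constructor
      · rintro ⟨hacc, hflatx⟩
        obtain ⟨w, hw, rfl⟩ := (taccepts Mc F x).mp hacc
        refine ⟨w, ⟨hw, ?_⟩, rfl⟩
        rw [← flatMap_emit_tau F w]; exact hflatx
      · rintro ⟨w, ⟨hw, hwF⟩, rfl⟩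
        exact ⟨(taccepts Mc F _).mpr ⟨w, hw, rfl⟩, by rw [flatMap_emit_tau]; exact hwF⟩
    rw [himg, Set.InjOn.encard_image ((tau_flatMap_injective F).injOn)]
  have hsets : {u : List A | (k : ℕ∞) ≤ {v : List A | v ∈ K ∧ (u, v) ∈ R}.encard}
      = {u : List A | (k : ℕ∞) ≤
          {x : List (Γ ⊕ A) | x ∈ (tDFA Mc F).accepts ∧ x.flatMap emit = u}.encard} := by
    ext u
    rw [Set.mem_setOf_eq, Set.mem_setOf_eq, hcount u, hcount2 u]
  rw [hsets]
  exact core_regular (tDFA Mc F) emit (emit_len) k
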